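/- Let γ ≥ 0 and γ₁ > 1/2. There is a constant C such that for all f ∈ H^γ(𝕋) ∩ H^{γ₁}(𝕋) and g ∈ H^{γ+1}(𝕋) ∩ H^{γ₁+1}(𝕋), the commutator satisfies ‖[J^γ ∂ₓ, g] f‖_{L²} ≤ C (‖f‖_{H^γ} ‖g‖_{H^{γ₁+1}} + ‖f‖_{H^{γ₁}} ‖g‖_{H^{γ+1}}), where J^γ = (1 - ∂ₓₓ)^{γ/2} and [A, B] = AB - BA. -/

import Mathlib

open MeasureTheory

noncomputable section

instance : Fact (0 < 2 * Real.pi) := ⟨by positivity⟩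

/-- Japanese bracket `⟨ξ⟩^γ = (1 + ξ²)^{γ/2}`, the symbol of `J^γ = (1-∂ₓₓ)^{γ/2}`. -/
def jb (γ : ℝ) (ξ : ℤ) : ℝ := (1 + (ξ : ℝ) ^ 2) ^ (γ / 2)

/-- The `H^γ(𝕋)` norm `‖f‖_{H^γ} = ‖⟨ξ⟩^γ f̂(ξ)‖_{ℓ²}`. -/
def hnorm (γ : ℝ) (f : AddCircle (2 * Real.pi) → ℂ) : ℝ :=
  Real.sqrt (∑' n : ℤ, (1 + (n : ℝ) ^ 2) ^ γ * ‖fourierCoeff f n‖ ^ 2)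

/-- `f ∈ H^γ(𝕋)`. -/
def memH (γ : ℝ) (f : AddCircle (2 * Real.pi) → ℂ) : Prop :=
  Integrable f AddCircle.haarAddCircle ∧
    Summable fun n : ℤ => (1 + (n : ℝ) ^ 2) ^ γ * ‖fourierCoeff f n‖ ^ 2



namespace Stmt15Aux

lemma cs_summable {a b : ℤ → ℝ} (ha0 : ∀ n, 0 ≤ a n) (hb0 : ∀ n, 0 ≤ b n)
    (ha : Summable fun n => a n ^ 2) (hb : Summable fun n => b n ^ 2) :
    Summable fun n => a n * b n := by
  have hX : (0:ℝ) ≤ ∑' n, a n ^ 2 := tsum_nonneg fun _ => sq_nonneg _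
  have hY : (0:ℝ) ≤ ∑' n, b n ^ 2 := tsum_nonneg fun _ => sq_nonneg _
  refine summable_of_sum_le (c := Real.sqrt ((∑' n, a n ^ 2) * ∑' n, b n ^ 2))
    (fun n => mul_nonneg (ha0 n) (hb0 n)) (fun u => ?_)
  have h := Finset.sum_mul_sq_le_sq_mul_sq u a b
  have h1 : ∑ x ∈ u, a x ^ 2 ≤ ∑' n, a n ^ 2 := Summable.sum_le_tsum u (fun i _ => sq_nonneg _) ha
  have h2 : ∑ x ∈ u, b x ^ 2 ≤ ∑' n, b n ^ 2 := Summable.sum_le_tsum u (fun i _ => sq_nonneg _) hb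
  have h0 : (0:ℝ) ≤ ∑ x ∈ u, a x * b x :=
    Finset.sum_nonneg fun i _ => mul_nonneg (ha0 i) (hb0 i)
  rw [Real.le_sqrt h0 (mul_nonneg hX hY)]
  exact h.trans (mul_le_mul h1 h2 (Finset.sum_nonneg fun i _ => sq_nonneg _) hX)

lemma cs_tsum_le {a b : ℤ → ℝ} (ha0 : ∀ n, 0 ≤ a n) (hb0 : ∀ n, 0 ≤ b n)
    (ha : Summable fun n => a n ^ 2) (hb : Summable fun n => b n ^ 2) :
    ∑' n, a n * b n ≤ Real.sqrt (∑' n, a n ^ 2) * Real.sqrt (∑' n, b n ^ 2) := by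
  have hX : (0:ℝ) ≤ ∑' n, a n ^ 2 := tsum_nonneg fun _ => sq_nonneg _
  have hY : (0:ℝ) ≤ ∑' n, b n ^ 2 := tsum_nonneg fun _ => sq_nonneg _
  rw [← Real.sqrt_mul hX]
  refine Summable.tsum_le_of_sum_le (cs_summable ha0 hb0 ha hb) (fun u => ?_)
  have h := Finset.sum_mul_sq_le_sq_mul_sq u a b
  have h1 : ∑ x ∈ u, a x ^ 2 ≤ ∑' n, a n ^ 2 := Summable.sum_le_tsum u (fun i _ => sq_nonneg _) ha
  have h2 : ∑ x ∈ u, b x ^ 2 ≤ ∑' n, b n ^ 2 := Summable.sum_le_tsum u (fun i _ => sq_nonneg _) hb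
  have h0 : (0:ℝ) ≤ ∑ x ∈ u, a x * b x :=
    Finset.sum_nonneg fun i _ => mul_nonneg (ha0 i) (hb0 i)
  rw [Real.le_sqrt h0 (mul_nonneg hX hY)]
  exact h.trans (mul_le_mul h1 h2 (Finset.sum_nonneg fun i _ => sq_nonneg _) hX)

lemma shift_summable {b : ℤ → ℝ} (hb : Summable b) (ξ : ℤ) :
    Summable fun n => b (ξ - n) :=
  hb.comp_injective (sub_right_injective)

lemma conv_comm (p q : ℤ → ℝ) (ξ : ℤ) :
    ∑' n, p n * q (ξ - n) = ∑' n, q n * p (ξ - n) := by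
  calc ∑' n, p n * q (ξ - n)
      = ∑' n, p (ξ - n) * q (ξ - (ξ - n)) := ((Equiv.subLeft ξ).tsum_eq _).symm
    _ = ∑' n, q n * p (ξ - n) := by
        apply tsum_congr; intro n; rw [sub_sub_cancel, mul_comm]

lemma young {a b : ℤ → ℝ} (ha0 : ∀ n, 0 ≤ a n) (hb0 : ∀ n, 0 ≤ b n)
    (ha : Summable fun n => a n ^ 2) (hb : Summable b) :
    Summable (fun ξ => (∑' n, a n * b (ξ - n)) ^ 2) ∧
    ∑' ξ : ℤ, (∑' n, a n * b (ξ - n)) ^ 2 ≤ (∑' n, a n ^ 2) * (∑' n, b n) ^ 2 := by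
  set X := ∑' n, a n ^ 2 with hXdef
  set B := ∑' n, b n with hBdef
  have hX : 0 ≤ X := tsum_nonneg fun _ => sq_nonneg _
  have hB : 0 ≤ B := tsum_nonneg hb0
  have hble : ∀ n, b n ≤ B := fun n => Summable.le_tsum hb n (fun j _ => hb0 j)
  -- the majorant d
  set d : ℤ → ℝ := fun ξ => ∑' n, a n ^ 2 * b (ξ - n) with hd
  have hd_sum : ∀ ξ, Summable fun n => a n ^ 2 * b (ξ - n) := by
    intro ξ
    refine Summable.of_nonneg_of_le (fun n => mul_nonneg (sq_nonneg _) (hb0 _))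
      (fun n => ?_) (ha.mul_right B)
    exact mul_le_mul_of_nonneg_left (hble _) (sq_nonneg _)
  have hd0 : ∀ ξ, 0 ≤ d ξ := fun ξ => tsum_nonneg fun n => mul_nonneg (sq_nonneg _) (hb0 _)
  -- pointwise Cauchy-Schwarz : c ξ ^ 2 ≤ d ξ * B
  have hkey : ∀ ξ, (∑' n, a n * b (ξ - n)) ^ 2 ≤ d ξ * B := by
    intro ξ
    have hshift : ∀ n : ℤ, Real.sqrt (b (ξ - n)) ^ 2 = b (ξ - n) :=
      fun n => Real.sq_sqrt (hb0 _)
    have hp2 : Summable fun n => (a n * Real.sqrt (b (ξ - n))) ^ 2 := by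
      refine (hd_sum ξ).congr fun n => ?_
      rw [mul_pow, hshift]
    have hq2 : Summable fun n => Real.sqrt (b (ξ - n)) ^ 2 := by
      refine (shift_summable hb ξ).congr fun n => (hshift n).symm
    have hcs := cs_tsum_le (a := fun n => a n * Real.sqrt (b (ξ - n)))
      (b := fun n => Real.sqrt (b (ξ - n)))
      (fun n => mul_nonneg (ha0 n) (Real.sqrt_nonneg _))
      (fun n => Real.sqrt_nonneg _) hp2 hq2
    have e1 : ∑' n, (a n * Real.sqrt (b (ξ - n))) * Real.sqrt (b (ξ - n))
        = ∑' n, a n * b (ξ - n) := by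
      apply tsum_congr; intro n
      rw [mul_assoc, Real.mul_self_sqrt (hb0 _)]
    have e2 : ∑' n, (a n * Real.sqrt (b (ξ - n))) ^ 2 = d ξ := by
      apply tsum_congr; intro n; rw [mul_pow, hshift]
    have e3 : ∑' n, Real.sqrt (b (ξ - n)) ^ 2 = B := by
      calc ∑' n, Real.sqrt (b (ξ - n)) ^ 2 = ∑' n, b (ξ - n) := tsum_congr hshift
        _ = B := (Equiv.subLeft ξ).tsum_eq b
    rw [e1, e2, e3] at hcs
    have h0 : 0 ≤ ∑' n, a n * b (ξ - n) :=
      tsum_nonneg fun n => mul_nonneg (ha0 n) (hb0 _)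
    calc (∑' n, a n * b (ξ - n)) ^ 2
        ≤ (Real.sqrt (d ξ) * Real.sqrt B) ^ 2 := by
          exact pow_le_pow_left₀ h0 hcs 2
      _ = d ξ * B := by
          rw [mul_pow, Real.sq_sqrt (hd0 ξ), Real.sq_sqrt hB]
  -- summability of d and bound
  have hdsum_bound : ∀ u : Finset ℤ, ∑ ξ ∈ u, d ξ ≤ X * B := by
    intro u
    have swap : ∑ ξ ∈ u, d ξ = ∑' n, ∑ ξ ∈ u, a n ^ 2 * b (ξ - n) := by
      rw [Summable.tsum_finsetSum (fun ξ _ => hd_sum ξ)]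
    rw [swap]
    have hle : ∀ n : ℤ, ∑ ξ ∈ u, a n ^ 2 * b (ξ - n) ≤ a n ^ 2 * B := by
      intro n
      rw [← Finset.mul_sum]
      refine mul_le_mul_of_nonneg_left ?_ (sq_nonneg _)
      have : ∑ ξ ∈ u, b (ξ - n) = ∑ m ∈ u.image (fun ξ => ξ - n), b m := by
        rw [Finset.sum_image (by intro x _ y _ h; exact sub_left_injective h)]
      rw [this]
      exact Summable.sum_le_tsum _ (fun i _ => hb0 i) hb
    have hsl : Summable fun n => ∑ ξ ∈ u, a n ^ 2 * b (ξ - n) := by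
      refine Summable.of_nonneg_of_le
        (fun n => Finset.sum_nonneg fun ξ _ => mul_nonneg (sq_nonneg _) (hb0 _))
        hle (ha.mul_right B)
    calc ∑' n, ∑ ξ ∈ u, a n ^ 2 * b (ξ - n) ≤ ∑' n, a n ^ 2 * B :=
          Summable.tsum_le_tsum hle hsl (ha.mul_right B)
      _ = X * B := tsum_mul_right
  have hdsum : Summable d := summable_of_sum_le hd0 hdsum_bound
  have hdtsum : ∑' ξ, d ξ ≤ X * B := Summable.tsum_le_of_sum_le hdsum hdsum_bound
  have hsum2 : Summable fun ξ => (∑' n, a n * b (ξ - n)) ^ 2 :=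
    Summable.of_nonneg_of_le (fun ξ => sq_nonneg _) hkey (hdsum.mul_right B)
  refine ⟨hsum2, ?_⟩
  calc ∑' ξ : ℤ, (∑' n, a n * b (ξ - n)) ^ 2 ≤ ∑' ξ, d ξ * B :=
        Summable.tsum_le_tsum hkey hsum2 (hdsum.mul_right B)
    _ = (∑' ξ, d ξ) * B := tsum_mul_right
    _ ≤ (X * B) * B := mul_le_mul_of_nonneg_right hdtsum hB
    _ = X * B ^ 2 := by ring

lemma symbol_bound (γ : ℝ) (hγ : 0 ≤ γ) (x y : ℝ) :
    |(1 + (x + y) ^ 2) ^ (γ / 2) * (x + y) - (1 + x ^ 2) ^ (γ / 2) * x|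
      ≤ (1 + γ) * 2 ^ γ * |y| * ((1 + x ^ 2) ^ (γ / 2) + (1 + y ^ 2) ^ (γ / 2)) := by
  set M : ℝ := 2 ^ γ * ((1 + x ^ 2) ^ (γ / 2) + (1 + y ^ 2) ^ (γ / 2)) with hM
  set φ : ℝ → ℝ := fun t => (1 + t ^ 2) ^ (γ / 2) * t with hφ
  set φ' : ℝ → ℝ := fun t => (γ / 2 * (1 + t ^ 2) ^ (γ / 2 - 1) * (2 * t)) * t
      + (1 + t ^ 2) ^ (γ / 2) * 1 with hφ'
  have hpos : ∀ t : ℝ, (0:ℝ) < 1 + t ^ 2 := fun t => by positivity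
  have hderiv : ∀ t : ℝ, HasDerivAt φ (φ' t) t := by
    intro t
    have h1 : HasDerivAt (fun t : ℝ => 1 + t ^ 2) (2 * t) t := by
      simpa using (hasDerivAt_pow 2 t).const_add 1
    have h2 := h1.rpow_const (p := γ / 2) (Or.inl (hpos t).ne')
    have h3 := h2.mul (hasDerivAt_id t)
    refine h3.congr_deriv ?_
    simp only [hφ', id]
    ring
  have hbound : ∀ t ∈ Set.uIcc x (x + y), ‖φ' t‖ ≤ (1 + γ) * M := by
    intro t ht
    have hstep1 : |φ' t| ≤ (1 + γ) * (1 + t ^ 2) ^ (γ / 2) := by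
      have hr1 : (0:ℝ) ≤ (1 + t ^ 2) ^ (γ / 2 - 1) := Real.rpow_nonneg (hpos t).le _
      have hr2 : (0:ℝ) ≤ (1 + t ^ 2) ^ (γ / 2) := Real.rpow_nonneg (hpos t).le _
      have hkey : (1 + t ^ 2) ^ (γ / 2 - 1) * (1 + t ^ 2) = (1 + t ^ 2) ^ (γ / 2) := by
        rw [← Real.rpow_add_one (hpos t).ne']
        ring_nf
      have habs : φ' t = γ * (t ^ 2 * (1 + t ^ 2) ^ (γ / 2 - 1)) + (1 + t ^ 2) ^ (γ / 2) := by
        simp only [hφ']; ring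
      have h0 : 0 ≤ φ' t := by
        rw [habs]; positivity
      rw [abs_of_nonneg h0, habs]
      have hmul : t ^ 2 * (1 + t ^ 2) ^ (γ / 2 - 1) ≤ (1 + t ^ 2) ^ (γ / 2) := by
        calc t ^ 2 * (1 + t ^ 2) ^ (γ / 2 - 1)
            ≤ (1 + t ^ 2) * (1 + t ^ 2) ^ (γ / 2 - 1) := by nlinarith
          _ = (1 + t ^ 2) ^ (γ / 2) := by rw [mul_comm]; exact hkey
      nlinarith
    have hstep2 : (1 + t ^ 2) ^ (γ / 2) ≤ M := by
      have htm := ht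
      rw [Set.mem_uIcc] at htm
      have habs : |t| ≤ |x| + |y| := by
        have hmax : |t| ≤ max |x| |x + y| := by
          rcases htm with ⟨h1, h2⟩ | ⟨h1, h2⟩
          · exact abs_le_max_abs_abs h1 h2
          · rw [max_comm]; exact abs_le_max_abs_abs h1 h2
        exact hmax.trans (max_le (le_add_of_nonneg_right (abs_nonneg y)) (abs_add_le x y))
      have ht2 : 1 + t ^ 2 ≤ 2 * ((1 + x ^ 2) + (1 + y ^ 2)) := by
        nlinarith [sq_abs t, sq_abs x, sq_abs y, abs_nonneg x, abs_nonneg y,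
          sq_nonneg (|x| - |y|), mul_self_le_mul_self (abs_nonneg t) habs]
      have h4γ : (4:ℝ) ^ (γ / 2) = 2 ^ γ := by
        rw [show (4:ℝ) = 2 ^ (2:ℝ) by norm_num [Real.rpow_natCast],
          ← Real.rpow_mul (by norm_num : (0:ℝ) ≤ 2)]
        congr 1
        ring
      rcases le_total (1 + x ^ 2) (1 + y ^ 2) with hc | hc
      · calc (1 + t ^ 2) ^ (γ / 2) ≤ (4 * (1 + y ^ 2)) ^ (γ / 2) := by
              apply Real.rpow_le_rpow (hpos t).le (by nlinarith) (by positivity)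
          _ = 2 ^ γ * (1 + y ^ 2) ^ (γ / 2) := by
              rw [Real.mul_rpow (by norm_num) (hpos y).le, h4γ]
          _ ≤ M := by
              rw [hM]
              have : (0:ℝ) ≤ (1 + x ^ 2) ^ (γ / 2) := Real.rpow_nonneg (hpos x).le _
              have h2γ : (0:ℝ) ≤ (2:ℝ) ^ γ := Real.rpow_nonneg (by norm_num) _
              nlinarith
      · calc (1 + t ^ 2) ^ (γ / 2) ≤ (4 * (1 + x ^ 2)) ^ (γ / 2) := by
              apply Real.rpow_le_rpow (hpos t).le (by nlinarith) (by positivity)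
          _ = 2 ^ γ * (1 + x ^ 2) ^ (γ / 2) := by
              rw [Real.mul_rpow (by norm_num) (hpos x).le, h4γ]
          _ ≤ M := by
              rw [hM]
              have : (0:ℝ) ≤ (1 + y ^ 2) ^ (γ / 2) := Real.rpow_nonneg (hpos y).le _
              have h2γ : (0:ℝ) ≤ (2:ℝ) ^ γ := Real.rpow_nonneg (by norm_num) _
              nlinarith
    rw [Real.norm_eq_abs]
    have hM0 : 0 ≤ (1 + t ^ 2) ^ (γ / 2) := Real.rpow_nonneg (hpos t).le _
    nlinarith
  have := (convex_uIcc x (x + y)).norm_image_sub_le_of_norm_hasDerivWithin_le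
    (f := φ) (f' := φ') (fun t ht => (hderiv t).hasDerivWithinAt) hbound
    Set.left_mem_uIcc Set.right_mem_uIcc
  rw [Real.norm_eq_abs, Real.norm_eq_abs, add_sub_cancel_left] at this
  calc |(1 + (x + y) ^ 2) ^ (γ / 2) * (x + y) - (1 + x ^ 2) ^ (γ / 2) * x|
      = |φ (x + y) - φ x| := rfl
    _ ≤ (1 + γ) * M * |y| := this
    _ = (1 + γ) * 2 ^ γ * |y| * ((1 + x ^ 2) ^ (γ / 2) + (1 + y ^ 2) ^ (γ / 2)) := by
        rw [hM]; ring

lemma summable_jbneg {γ₁ : ℝ} (hγ₁ : 1 / 2 < γ₁) :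
    Summable fun n : ℤ => (1 + (n : ℝ) ^ 2) ^ (-γ₁) := by
  have hmaj : Summable fun n : ℤ =>
      (if n = 0 then (1:ℝ) else 0) + |(n : ℝ)| ^ (-(2 * γ₁)) := by
    exact ((hasSum_ite_eq (0:ℤ) (1:ℝ)).summable).add
      (Real.summable_abs_int_rpow (by linarith))
  refine Summable.of_nonneg_of_le (fun n => Real.rpow_nonneg (by positivity) _)
    (fun n => ?_) hmaj
  by_cases hn : n = 0
  · subst hn
    simp [Real.zero_rpow (by intro h; nlinarith : -(2*γ₁) ≠ 0)]
  · have h1 : (1:ℝ) ≤ (n:ℝ) ^ 2 := by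
      have : (1:ℝ) ≤ |(n:ℝ)| := by
        rw [← Int.cast_abs]; exact_mod_cast Int.one_le_abs (by exact_mod_cast hn)
      nlinarith [sq_abs (n:ℝ)]
    have h2 : (1 + (n:ℝ) ^ 2) ^ (-γ₁) ≤ ((n:ℝ) ^ 2) ^ (-γ₁) :=
      Real.rpow_le_rpow_of_nonpos (by linarith) (by linarith) (by linarith)
    have h3 : ((n:ℝ) ^ 2) ^ (-γ₁) = |(n:ℝ)| ^ (-(2 * γ₁)) := by
      rw [← sq_abs, ← Real.rpow_natCast |(n:ℝ)| 2, ← Real.rpow_mul (abs_nonneg _)]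
      congr 1
      push_cast
      ring
    rw [if_neg hn]
    rw [h3] at h2
    linarith

lemma sq_rpow_half (γ z : ℝ) (hz : 0 ≤ z) : (z ^ (γ / 2)) ^ 2 = z ^ γ := by
  rw [← Real.rpow_natCast (z ^ (γ / 2)) 2, ← Real.rpow_mul hz]
  congr 1
  push_cast
  ring

lemma sqrt_add_le (a b : ℝ) (ha : 0 ≤ a) (hb : 0 ≤ b) :
    Real.sqrt (a + b) ≤ Real.sqrt a + Real.sqrt b := by
  rw [show Real.sqrt a + Real.sqrt b = Real.sqrt ((Real.sqrt a + Real.sqrt b) ^ 2) from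
    (Real.sqrt_sq (by positivity)).symm]
  apply Real.sqrt_le_sqrt
  nlinarith [Real.sq_sqrt ha, Real.sq_sqrt hb, Real.sqrt_nonneg a, Real.sqrt_nonneg b,
    Real.sqrt_mul_self ha]

lemma l1_le {γ₁ : ℝ} (hγ₁ : 1 / 2 < γ₁) {c : ℤ → ℝ} (hc0 : ∀ n, 0 ≤ c n)
    (hc : Summable fun n : ℤ => (1 + (n : ℝ) ^ 2) ^ γ₁ * c n ^ 2) :
    Summable c ∧ ∑' n, c n ≤ Real.sqrt (∑' n : ℤ, (1 + (n : ℝ) ^ 2) ^ (-γ₁)) *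
      Real.sqrt (∑' n : ℤ, (1 + (n : ℝ) ^ 2) ^ γ₁ * c n ^ 2) := by
  have hpos : ∀ n : ℤ, (0:ℝ) < 1 + (n:ℝ) ^ 2 := fun n => by positivity
  set e : ℤ → ℝ := fun n => (1 + (n:ℝ) ^ 2) ^ (-γ₁ / 2) with he
  set r : ℤ → ℝ := fun n => (1 + (n:ℝ) ^ 2) ^ (γ₁ / 2) * c n with hr
  have he0 : ∀ n, 0 ≤ e n := fun n => Real.rpow_nonneg (hpos n).le _
  have hr0 : ∀ n, 0 ≤ r n := fun n => mul_nonneg (Real.rpow_nonneg (hpos n).le _) (hc0 n)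
  have hce : ∀ n, c n = e n * r n := by
    intro n
    simp only [he, hr]
    rw [← mul_assoc, ← Real.rpow_add (hpos n)]
    rw [show -γ₁ / 2 + γ₁ / 2 = 0 by ring, Real.rpow_zero, one_mul]
  have he2 : Summable fun n => e n ^ 2 := by
    refine (summable_jbneg hγ₁).congr fun n => ?_
    rw [sq_rpow_half (-γ₁) _ (hpos n).le]
  have hr2 : Summable fun n => r n ^ 2 := by
    refine hc.congr fun n => ?_
    simp only [hr]
    rw [mul_pow, sq_rpow_half γ₁ _ (hpos n).le]
  constructor
  · exact (cs_summable he0 hr0 he2 hr2).congr fun n => (hce n).symm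
  · calc ∑' n, c n = ∑' n, e n * r n := tsum_congr hce
      _ ≤ Real.sqrt (∑' n, e n ^ 2) * Real.sqrt (∑' n, r n ^ 2) :=
          cs_tsum_le he0 hr0 he2 hr2
      _ = Real.sqrt (∑' n : ℤ, (1 + (n : ℝ) ^ 2) ^ (-γ₁)) *
          Real.sqrt (∑' n : ℤ, (1 + (n : ℝ) ^ 2) ^ γ₁ * c n ^ 2) := by
          congr 1
          · congr 1; exact tsum_congr fun n => by rw [sq_rpow_half (-γ₁) _ (hpos n).le]
          · congr 1; exact tsum_congr fun n => by
              simp only [hr]; rw [mul_pow, sq_rpow_half γ₁ _ (hpos n).le]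

end Stmt15Aux

open Stmt15Aux

set_option maxHeartbeats 1000000 in
/-- Commutator estimate `‖[J^γ ∂ₓ, g] f‖_{L²} ≲ ‖f‖_{H^γ}‖g‖_{H^{γ₁+1}} + ‖f‖_{H^{γ₁}}‖g‖_{H^{γ+1}}`,
expressed on the Fourier side: the `ξ`-th Fourier coefficient of `[J^γ ∂ₓ, g] f` is
`i ∑_{ξ = ξ₁ + ξ₂} (⟨ξ⟩^γ ξ - ⟨ξ₁⟩^γ ξ₁) f̂(ξ₁) ĝ(ξ₂)`, and its `L²(𝕋)` norm (with
normalized Haar measure) is the `ℓ²` norm of these coefficients. -/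
theorem stmt15 (γ γ₁ : ℝ) (hγ : 0 ≤ γ) (hγ₁ : 1 / 2 < γ₁) : ∃ C : ℝ, 0 < C ∧
    ∀ f g : AddCircle (2 * Real.pi) → ℂ,
      memH γ f → memH γ₁ f → memH (γ + 1) g → memH (γ₁ + 1) g →
      Real.sqrt (∑' ξ : ℤ,
          ‖∑' ξ₁ : ℤ, Complex.I * ((jb γ ξ * (ξ : ℝ) - jb γ ξ₁ * (ξ₁ : ℝ) : ℝ) : ℂ) *
              fourierCoeff f ξ₁ * fourierCoeff g (ξ - ξ₁)‖ ^ 2)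
        ≤ C * (hnorm γ f * hnorm (γ₁ + 1) g + hnorm γ₁ f * hnorm (γ + 1) g) := by
  classical
  set K : ℝ := (1 + γ) * 2 ^ γ with hK
  have h2γpos : (0:ℝ) < 2 ^ γ := Real.rpow_pos_of_pos (by norm_num) γ
  have hK0 : 0 < K := by positivity
  set s0 : ℝ := ∑' n : ℤ, (1 + (n : ℝ) ^ 2) ^ (-γ₁) with hs0
  have hs00 : 0 ≤ Real.sqrt s0 := Real.sqrt_nonneg _
  refine ⟨Real.sqrt 2 * K * (Real.sqrt s0 + 1), by positivity, ?_⟩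
  intro f g hfγ hfγ₁ hgγ hgγ₁
  have hpos : ∀ n : ℤ, (0:ℝ) < 1 + (n:ℝ) ^ 2 := fun n => by positivity
  set A : ℤ → ℝ := fun n => ‖fourierCoeff f n‖ with hA
  set B : ℤ → ℝ := fun n => ‖fourierCoeff g n‖ with hB
  set u : ℤ → ℝ := fun n => (1 + (n:ℝ) ^ 2) ^ (γ / 2) * A n with hu
  set v : ℤ → ℝ := fun n => |(n:ℝ)| * B n with hv
  set w : ℤ → ℝ := fun n => |(n:ℝ)| * (1 + (n:ℝ) ^ 2) ^ (γ / 2) * B n with hw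
  have hA0 : ∀ n, 0 ≤ A n := fun n => norm_nonneg _
  have hB0 : ∀ n, 0 ≤ B n := fun n => norm_nonneg _
  have hu0 : ∀ n, 0 ≤ u n := fun n => mul_nonneg (Real.rpow_nonneg (hpos n).le _) (hA0 n)
  have hv0 : ∀ n, 0 ≤ v n := fun n => mul_nonneg (abs_nonneg _) (hB0 n)
  have hw0 : ∀ n, 0 ≤ w n :=
    fun n => mul_nonneg (mul_nonneg (abs_nonneg _) (Real.rpow_nonneg (hpos n).le _)) (hB0 n)
  -- ℓ² facts
  have hu2' : ∀ n : ℤ, u n ^ 2 = (1 + (n:ℝ) ^ 2) ^ γ * A n ^ 2 := fun n => by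
    simp only [hu]; rw [mul_pow, sq_rpow_half γ _ (hpos n).le]
  have hu2 : Summable fun n => u n ^ 2 := hfγ.2.congr fun n => (hu2' n).symm
  have hu_ts : Real.sqrt (∑' n, u n ^ 2) = hnorm γ f := by
    unfold hnorm; congr 1; exact tsum_congr hu2'
  have hone_le : ∀ (p : ℝ), 0 ≤ p → ∀ n : ℤ, (1:ℝ) ≤ (1 + (n:ℝ) ^ 2) ^ p := by
    intro p hp n
    calc (1:ℝ) = 1 ^ p := (Real.one_rpow p).symm
      _ ≤ (1 + (n:ℝ) ^ 2) ^ p :=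
        Real.rpow_le_rpow zero_le_one (by nlinarith [sq_nonneg ((n:ℝ))]) hp
  have hA2 : Summable fun n => A n ^ 2 := by
    refine Summable.of_nonneg_of_le (fun n => sq_nonneg _) (fun n => ?_) hfγ₁.2
    nlinarith [hone_le γ₁ (by linarith) n, sq_nonneg (A n)]
  have hv2le : ∀ n : ℤ, v n ^ 2 ≤ (1 + (n:ℝ) ^ 2) ^ (γ₁ + 1) * B n ^ 2 := by
    intro n
    have h1 : (1 + (n:ℝ) ^ 2) ≤ (1 + (n:ℝ) ^ 2) ^ (γ₁ + 1) := by
      nth_rewrite 1 [← Real.rpow_one (1 + (n:ℝ) ^ 2)]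
      exact Real.rpow_le_rpow_of_exponent_le (by nlinarith [sq_nonneg ((n:ℝ))]) (by linarith)
    have h2 : v n ^ 2 = (n:ℝ) ^ 2 * B n ^ 2 := by simp only [hv]; rw [mul_pow, sq_abs]
    rw [h2]
    nlinarith [sq_nonneg (B n), sq_nonneg ((n:ℝ))]
  have hv2 : Summable fun n => v n ^ 2 :=
    Summable.of_nonneg_of_le (fun n => sq_nonneg _) hv2le hgγ₁.2
  have hw2le : ∀ n : ℤ, w n ^ 2 ≤ (1 + (n:ℝ) ^ 2) ^ (γ + 1) * B n ^ 2 := by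
    intro n
    have h1 : w n ^ 2 = (n:ℝ) ^ 2 * ((1 + (n:ℝ) ^ 2) ^ γ * B n ^ 2) := by
      simp only [hw]; rw [mul_pow, mul_pow, sq_abs, sq_rpow_half γ _ (hpos n).le]; ring
    have h2 : (1 + (n:ℝ) ^ 2) ^ (γ + 1) = (1 + (n:ℝ) ^ 2) ^ γ * (1 + (n:ℝ) ^ 2) :=
      Real.rpow_add_one (hpos n).ne' γ
    rw [h1, h2]
    have h3 := Real.rpow_nonneg (hpos n).le γ
    nlinarith [sq_nonneg (B n), sq_nonneg ((n:ℝ)), mul_nonneg h3 (sq_nonneg (B n))]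
  have hw2 : Summable fun n => w n ^ 2 :=
    Summable.of_nonneg_of_le (fun n => sq_nonneg _) hw2le hgγ.2
  have hw_ts : Real.sqrt (∑' n, w n ^ 2) ≤ hnorm (γ + 1) g := by
    unfold hnorm
    exact Real.sqrt_le_sqrt (Summable.tsum_le_tsum hw2le hw2 hgγ.2)
  -- ℓ¹ facts
  obtain ⟨hA1, hA1le⟩ := l1_le hγ₁ hA0 hfγ₁.2
  have hA1le' : ∑' n, A n ≤ Real.sqrt s0 * hnorm γ₁ f := hA1le
  have hvwt : ∀ n : ℤ, (1 + (n:ℝ) ^ 2) ^ γ₁ * v n ^ 2 ≤ (1 + (n:ℝ) ^ 2) ^ (γ₁ + 1) * B n ^ 2 := by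
    intro n
    have h2 : v n ^ 2 = (n:ℝ) ^ 2 * B n ^ 2 := by simp only [hv]; rw [mul_pow, sq_abs]
    have h3 : (1 + (n:ℝ) ^ 2) ^ (γ₁ + 1) = (1 + (n:ℝ) ^ 2) ^ γ₁ * (1 + (n:ℝ) ^ 2) :=
      Real.rpow_add_one (hpos n).ne' γ₁
    rw [h2, h3]
    have h4 := Real.rpow_nonneg (hpos n).le γ₁
    nlinarith [sq_nonneg (B n), sq_nonneg ((n:ℝ)), mul_nonneg h4 (sq_nonneg (B n))]
  have hv1s : Summable fun n : ℤ => (1 + (n:ℝ) ^ 2) ^ γ₁ * v n ^ 2 := by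
    refine Summable.of_nonneg_of_le
      (fun n => mul_nonneg (Real.rpow_nonneg (hpos n).le _) (sq_nonneg _)) hvwt hgγ₁.2
  obtain ⟨hv1, hv1le⟩ := l1_le hγ₁ hv0 hv1s
  have hv1le' : ∑' n, v n ≤ Real.sqrt s0 * hnorm (γ₁ + 1) g := by
    refine hv1le.trans (mul_le_mul_of_nonneg_left ?_ hs00)
    unfold hnorm
    exact Real.sqrt_le_sqrt (Summable.tsum_le_tsum hvwt hv1s hgγ₁.2)
  -- pointwise term bound
  have hTle : ∀ ξ ξ₁ : ℤ,
      ‖Complex.I * ((jb γ ξ * (ξ : ℝ) - jb γ ξ₁ * (ξ₁ : ℝ) : ℝ) : ℂ) *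
        fourierCoeff f ξ₁ * fourierCoeff g (ξ - ξ₁)‖
      ≤ K * (u ξ₁ * v (ξ - ξ₁) + A ξ₁ * w (ξ - ξ₁)) := by
    intro ξ ξ₁
    have hnorm_eq : ‖Complex.I * ((jb γ ξ * (ξ : ℝ) - jb γ ξ₁ * (ξ₁ : ℝ) : ℝ) : ℂ) *
        fourierCoeff f ξ₁ * fourierCoeff g (ξ - ξ₁)‖
        = |jb γ ξ * (ξ:ℝ) - jb γ ξ₁ * (ξ₁:ℝ)| * (A ξ₁ * B (ξ - ξ₁)) := by
      simp only [norm_mul, Complex.norm_I, one_mul, Complex.norm_real, Real.norm_eq_abs,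
        hA, hB]
      ring
    have hsym := symbol_bound γ hγ (ξ₁ : ℝ) ((ξ:ℝ) - (ξ₁:ℝ))
    rw [show (ξ₁:ℝ) + ((ξ:ℝ) - (ξ₁:ℝ)) = (ξ:ℝ) by ring] at hsym
    rw [hnorm_eq]
    have hABn : 0 ≤ A ξ₁ * B (ξ - ξ₁) := mul_nonneg (hA0 _) (hB0 _)
    calc |jb γ ξ * (ξ:ℝ) - jb γ ξ₁ * (ξ₁:ℝ)| * (A ξ₁ * B (ξ - ξ₁))
        ≤ ((1 + γ) * 2 ^ γ * |(ξ:ℝ) - (ξ₁:ℝ)| *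
            ((1 + (ξ₁:ℝ) ^ 2) ^ (γ / 2) + (1 + ((ξ:ℝ) - (ξ₁:ℝ)) ^ 2) ^ (γ / 2))) *
            (A ξ₁ * B (ξ - ξ₁)) := by
          refine mul_le_mul_of_nonneg_right ?_ hABn
          simpa only [jb] using hsym
      _ = K * (u ξ₁ * v (ξ - ξ₁) + A ξ₁ * w (ξ - ξ₁)) := by
          simp only [hu, hv, hw, hK]
          push_cast
          ring
  -- convolution summability
  have hconv1 : ∀ ξ : ℤ, Summable fun ξ₁ => u ξ₁ * v (ξ - ξ₁) := fun ξ =>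
    cs_summable hu0 (fun n => hv0 _) hu2 (shift_summable hv2 ξ)
  have hconv2 : ∀ ξ : ℤ, Summable fun ξ₁ => A ξ₁ * w (ξ - ξ₁) := fun ξ =>
    cs_summable hA0 (fun n => hw0 _) hA2 (shift_summable hw2 ξ)
  have hTsum : ∀ ξ : ℤ, Summable fun ξ₁ =>
      ‖Complex.I * ((jb γ ξ * (ξ : ℝ) - jb γ ξ₁ * (ξ₁ : ℝ) : ℝ) : ℂ) *
        fourierCoeff f ξ₁ * fourierCoeff g (ξ - ξ₁)‖ := fun ξ =>
    Summable.of_nonneg_of_le (fun _ => norm_nonneg _) (hTle ξ)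
      (((hconv1 ξ).add (hconv2 ξ)).mul_left K)
  set c₁ : ℤ → ℝ := fun ξ => ∑' n, u n * v (ξ - n) with hc₁
  set c₂ : ℤ → ℝ := fun ξ => ∑' n, w n * A (ξ - n) with hc₂
  have hc10 : ∀ ξ, 0 ≤ c₁ ξ := fun ξ => tsum_nonneg fun n => mul_nonneg (hu0 n) (hv0 _)
  have hc20 : ∀ ξ, 0 ≤ c₂ ξ := fun ξ => tsum_nonneg fun n => mul_nonneg (hw0 n) (hA0 _)
  have hS : ∀ ξ : ℤ, ‖∑' ξ₁ : ℤ, Complex.I * ((jb γ ξ * (ξ : ℝ) - jb γ ξ₁ * (ξ₁ : ℝ) : ℝ) : ℂ) *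
      fourierCoeff f ξ₁ * fourierCoeff g (ξ - ξ₁)‖ ≤ K * (c₁ ξ + c₂ ξ) := by
    intro ξ
    calc ‖∑' ξ₁ : ℤ, Complex.I * ((jb γ ξ * (ξ : ℝ) - jb γ ξ₁ * (ξ₁ : ℝ) : ℝ) : ℂ) *
        fourierCoeff f ξ₁ * fourierCoeff g (ξ - ξ₁)‖
        ≤ ∑' ξ₁ : ℤ, ‖Complex.I * ((jb γ ξ * (ξ : ℝ) - jb γ ξ₁ * (ξ₁ : ℝ) : ℝ) : ℂ) *
            fourierCoeff f ξ₁ * fourierCoeff g (ξ - ξ₁)‖ := norm_tsum_le_tsum_norm (hTsum ξ)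
      _ ≤ ∑' ξ₁ : ℤ, K * (u ξ₁ * v (ξ - ξ₁) + A ξ₁ * w (ξ - ξ₁)) :=
          Summable.tsum_le_tsum (hTle ξ) (hTsum ξ) (((hconv1 ξ).add (hconv2 ξ)).mul_left K)
      _ = K * (c₁ ξ + (∑' ξ₁, A ξ₁ * w (ξ - ξ₁))) := by
          rw [tsum_mul_left, Summable.tsum_add (hconv1 ξ) (hconv2 ξ)]
      _ = K * (c₁ ξ + c₂ ξ) := by rw [conv_comm A w ξ]
  have young1 := young hu0 hv0 hu2 hv1
  have young2 := young hw0 hA0 hw2 hA1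
  have hSsq : ∀ ξ : ℤ, ‖∑' ξ₁ : ℤ, Complex.I *
      ((jb γ ξ * (ξ : ℝ) - jb γ ξ₁ * (ξ₁ : ℝ) : ℝ) : ℂ) *
      fourierCoeff f ξ₁ * fourierCoeff g (ξ - ξ₁)‖ ^ 2
      ≤ 2 * K ^ 2 * (c₁ ξ ^ 2 + c₂ ξ ^ 2) := by
    intro ξ
    have h2 := pow_le_pow_left₀ (norm_nonneg _) (hS ξ) 2
    nlinarith [mul_nonneg (sq_nonneg K) (sq_nonneg (c₁ ξ - c₂ ξ))]
  have hRHSsum : Summable fun ξ => 2 * K ^ 2 * (c₁ ξ ^ 2 + c₂ ξ ^ 2) :=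
    ((young1.1).add (young2.1)).mul_left _
  have hSsq_sum : Summable fun ξ : ℤ => ‖∑' ξ₁ : ℤ, Complex.I *
      ((jb γ ξ * (ξ : ℝ) - jb γ ξ₁ * (ξ₁ : ℝ) : ℝ) : ℂ) *
      fourierCoeff f ξ₁ * fourierCoeff g (ξ - ξ₁)‖ ^ 2 :=
    Summable.of_nonneg_of_le (fun ξ => by positivity) hSsq hRHSsum
  have hX0 : 0 ≤ ∑' n, u n ^ 2 := tsum_nonneg fun _ => sq_nonneg _
  have hW0 : 0 ≤ ∑' n, w n ^ 2 := tsum_nonneg fun _ => sq_nonneg _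
  have hV0 : 0 ≤ ∑' n, v n := tsum_nonneg hv0
  have hAt0 : 0 ≤ ∑' n, A n := tsum_nonneg hA0
  have hnγf : 0 ≤ hnorm γ f := Real.sqrt_nonneg _
  have hnγ₁f : 0 ≤ hnorm γ₁ f := Real.sqrt_nonneg _
  have hnγg : 0 ≤ hnorm (γ + 1) g := Real.sqrt_nonneg _
  have hnγ₁g : 0 ≤ hnorm (γ₁ + 1) g := Real.sqrt_nonneg _
  calc Real.sqrt (∑' ξ : ℤ,
      ‖∑' ξ₁ : ℤ, Complex.I * ((jb γ ξ * (ξ : ℝ) - jb γ ξ₁ * (ξ₁ : ℝ) : ℝ) : ℂ) *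
          fourierCoeff f ξ₁ * fourierCoeff g (ξ - ξ₁)‖ ^ 2)
      ≤ Real.sqrt (∑' ξ : ℤ, 2 * K ^ 2 * (c₁ ξ ^ 2 + c₂ ξ ^ 2)) :=
        Real.sqrt_le_sqrt (Summable.tsum_le_tsum hSsq hSsq_sum hRHSsum)
    _ = Real.sqrt (2 * K ^ 2 * ((∑' ξ, c₁ ξ ^ 2) + ∑' ξ, c₂ ξ ^ 2)) := by
        rw [tsum_mul_left, Summable.tsum_add young1.1 young2.1]
    _ ≤ Real.sqrt (2 * K ^ 2 *
        ((∑' n, u n ^ 2) * (∑' n, v n) ^ 2 + (∑' n, w n ^ 2) * (∑' n, A n) ^ 2)) := by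
        apply Real.sqrt_le_sqrt
        have := add_le_add young1.2 young2.2
        nlinarith [sq_nonneg K]
    _ = Real.sqrt 2 * K * Real.sqrt
        ((∑' n, u n ^ 2) * (∑' n, v n) ^ 2 + (∑' n, w n ^ 2) * (∑' n, A n) ^ 2) := by
        rw [Real.sqrt_mul (by positivity : (0:ℝ) ≤ 2 * K ^ 2),
          Real.sqrt_mul (by norm_num : (0:ℝ) ≤ 2), Real.sqrt_sq hK0.le]
    _ ≤ Real.sqrt 2 * K * (Real.sqrt ((∑' n, u n ^ 2) * (∑' n, v n) ^ 2) +
        Real.sqrt ((∑' n, w n ^ 2) * (∑' n, A n) ^ 2)) := by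
        refine mul_le_mul_of_nonneg_left ?_ (by positivity)
        exact sqrt_add_le _ _ (by positivity) (by positivity)
    _ = Real.sqrt 2 * K * (Real.sqrt (∑' n, u n ^ 2) * (∑' n, v n) +
        Real.sqrt (∑' n, w n ^ 2) * (∑' n, A n)) := by
        rw [Real.sqrt_mul hX0, Real.sqrt_sq hV0, Real.sqrt_mul hW0, Real.sqrt_sq hAt0]
    _ ≤ Real.sqrt 2 * K * (hnorm γ f * (Real.sqrt s0 * hnorm (γ₁ + 1) g) +
        hnorm (γ + 1) g * (Real.sqrt s0 * hnorm γ₁ f)) := by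
        refine mul_le_mul_of_nonneg_left (add_le_add ?_ ?_) (by positivity)
        · rw [hu_ts]
          exact mul_le_mul_of_nonneg_left hv1le' hnγf
        · exact mul_le_mul hw_ts hA1le' hAt0 hnγg
    _ = (Real.sqrt 2 * K * Real.sqrt s0) *
        (hnorm γ f * hnorm (γ₁ + 1) g + hnorm γ₁ f * hnorm (γ + 1) g) := by ring
    _ ≤ (Real.sqrt 2 * K * (Real.sqrt s0 + 1)) *
        (hnorm γ f * hnorm (γ₁ + 1) g + hnorm γ₁ f * hnorm (γ + 1) g) := by
        refine mul_le_mul_of_nonneg_right ?_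
          (add_nonneg (mul_nonneg hnγf hnγ₁g) (mul_nonneg hnγ₁f hnγg))
        nlinarith [Real.sqrt_nonneg (2:ℝ), hK0]
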